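/- Let s_0, s_1, s_2 be positive real numbers, N = s_0 + s_1 + s_2, and L(x_1, x_2) = s_1 log x_1 + s_2 log x_2 − N log(1 + x_1 + x_2). Let H_L(x) be the toric Hessian of L, i.e. the 2×2 matrix with entries θ_iθ_jL where θ_i = x_i ∂/∂x_i. Then at the critical point x̂ = (s_1/s_0, s_2/s_0) one has det H_L(x̂) = s_0 s_1 s_2 / (s_0 + s_1 + s_2) ≠ 0, and therefore det(H_L(x̂))^{−1} = 1/(s_0 s_1) + 1/(s_0 s_2) + 1/(s_1 s_2). -/

import Mathlib

noncomputable section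

/-- The first Euler operator `θ₁ = x₁ ∂/∂x₁` on functions of two real variables. -/
def theta1 (f : ℝ × ℝ → ℝ) : ℝ × ℝ → ℝ :=
  fun x => x.1 * deriv (fun t => f (t, x.2)) x.1

/-- The second Euler operator `θ₂ = x₂ ∂/∂x₂` on functions of two real variables. -/
def theta2 (f : ℝ × ℝ → ℝ) : ℝ × ℝ → ℝ :=
  fun x => x.2 * deriv (fun t => f (x.1, t)) x.2

namespace Stmt15Aux

variable (s1 s2 N : ℝ)

/-- the model log-likelihood -/
def Lfun (s1 s2 N : ℝ) : ℝ × ℝ → ℝ :=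
  fun x => s1 * Real.log x.1 + s2 * Real.log x.2 - N * Real.log (1 + x.1 + x.2)

lemma theta1_L (t b : ℝ) (ht : 0 < t) (hb : 0 < b) :
    theta1 (Lfun s1 s2 N) (t, b) = s1 - N * t / (1 + t + b) := by
  have hden : (0:ℝ) < 1 + t + b := by linarith
  have h2 : HasDerivAt (fun u : ℝ => 1 + u + b) 1 t := by
    simpa using ((hasDerivAt_id t).const_add 1).add_const b
  have h3 : HasDerivAt (fun u : ℝ => Real.log (1 + u + b)) ((1 + t + b)⁻¹ * 1) t :=
    by have := (Real.hasDerivAt_log hden.ne').comp t h2; exact this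
  have h1 : HasDerivAt (fun u : ℝ => s1 * Real.log u) (s1 * t⁻¹) t :=
    (Real.hasDerivAt_log ht.ne').const_mul s1
  have h : HasDerivAt (fun u : ℝ => Lfun s1 s2 N (u, b))
      (s1 * t⁻¹ - N * ((1 + t + b)⁻¹ * 1)) t :=
    ((h1.add_const (s2 * Real.log b)).sub (h3.const_mul N))
  simp only [theta1, h.deriv]
  field_simp

lemma theta2_L (a u : ℝ) (ha : 0 < a) (hu : 0 < u) :
    theta2 (Lfun s1 s2 N) (a, u) = s2 - N * u / (1 + a + u) := by
  have hden : (0:ℝ) < 1 + a + u := by linarith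
  have h2 : HasDerivAt (fun v : ℝ => 1 + a + v) 1 u := by
    simpa using (hasDerivAt_id u).const_add (1 + a)
  have h3 : HasDerivAt (fun v : ℝ => Real.log (1 + a + v)) ((1 + a + u)⁻¹ * 1) u :=
    (Real.hasDerivAt_log hden.ne').comp u h2
  have h1 : HasDerivAt (fun v : ℝ => s2 * Real.log v) (s2 * u⁻¹) u :=
    (Real.hasDerivAt_log hu.ne').const_mul s2
  have h : HasDerivAt (fun v : ℝ => Lfun s1 s2 N (a, v))
      (s2 * u⁻¹ - N * ((1 + a + u)⁻¹ * 1)) u := by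
    have := ((h1.const_add (s1 * Real.log a)).sub (h3.const_mul N))
    exact this
  simp only [theta2, h.deriv]
  field_simp

end Stmt15Aux

namespace Stmt15Aux

lemma t11 (a b : ℝ) (ha : 0 < a) (hb : 0 < b) :
    theta1 (theta1 (Lfun s1 s2 N)) (a, b)
      = -(a * (N * (1 + a + b) - N * a) / (1 + a + b) ^ 2) := by
  have hden : (0:ℝ) < 1 + a + b := by linarith
  have heq : (fun t => theta1 (Lfun s1 s2 N) (t, b))
      =ᶠ[nhds a] fun t => s1 - N * t / (1 + t + b) := by
    filter_upwards [eventually_gt_nhds ha] with t ht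
    exact theta1_L s1 s2 N t b ht hb
  have hnum : HasDerivAt (fun t : ℝ => N * t) N a := by
    simpa using (hasDerivAt_id a).const_mul N
  have hd : HasDerivAt (fun t : ℝ => 1 + t + b) 1 a := by
    simpa using ((hasDerivAt_id a).const_add 1).add_const b
  have hdiv : HasDerivAt (fun t : ℝ => N * t / (1 + t + b))
      ((N * (1 + a + b) - N * a * 1) / (1 + a + b) ^ 2) a :=
    hnum.div hd hden.ne'
  have hg : HasDerivAt (fun t : ℝ => s1 - N * t / (1 + t + b))
      (-((N * (1 + a + b) - N * a * 1) / (1 + a + b) ^ 2)) a := hdiv.const_sub s1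
  show a * deriv (fun t => theta1 (Lfun s1 s2 N) (t, b)) a = _
  rw [heq.deriv_eq, hg.deriv]
  ring

lemma t21 (a b : ℝ) (ha : 0 < a) (hb : 0 < b) :
    theta2 (theta1 (Lfun s1 s2 N)) (a, b)
      = b * (N * a / (1 + a + b) ^ 2) := by
  have hden : (0:ℝ) < 1 + a + b := by linarith
  have heq : (fun u => theta1 (Lfun s1 s2 N) (a, u))
      =ᶠ[nhds b] fun u => s1 - N * a / (1 + a + u) := by
    filter_upwards [eventually_gt_nhds hb] with u hu
    exact theta1_L s1 s2 N a u ha hu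
  have hd : HasDerivAt (fun u : ℝ => 1 + a + u) 1 b := by
    simpa using (hasDerivAt_id b).const_add (1 + a)
  have hdiv : HasDerivAt (fun u : ℝ => N * a / (1 + a + u))
      ((0 * (1 + a + b) - N * a * 1) / (1 + a + b) ^ 2) b :=
    (hasDerivAt_const b (N * a)).div hd hden.ne'
  have hg : HasDerivAt (fun u : ℝ => s1 - N * a / (1 + a + u))
      (-((0 * (1 + a + b) - N * a * 1) / (1 + a + b) ^ 2)) b := hdiv.const_sub s1
  simp only [theta2, heq.deriv_eq, hg.deriv]
  ring

lemma t12 (a b : ℝ) (ha : 0 < a) (hb : 0 < b) :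
    theta1 (theta2 (Lfun s1 s2 N)) (a, b)
      = a * (N * b / (1 + a + b) ^ 2) := by
  have hden : (0:ℝ) < 1 + a + b := by linarith
  have heq : (fun t => theta2 (Lfun s1 s2 N) (t, b))
      =ᶠ[nhds a] fun t => s2 - N * b / (1 + t + b) := by
    filter_upwards [eventually_gt_nhds ha] with t ht
    exact theta2_L s1 s2 N t b ht hb
  have hd : HasDerivAt (fun t : ℝ => 1 + t + b) 1 a := by
    simpa using ((hasDerivAt_id a).const_add 1).add_const b
  have hdiv : HasDerivAt (fun t : ℝ => N * b / (1 + t + b))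
      ((0 * (1 + a + b) - N * b * 1) / (1 + a + b) ^ 2) a :=
    (hasDerivAt_const a (N * b)).div hd hden.ne'
  have hg : HasDerivAt (fun t : ℝ => s2 - N * b / (1 + t + b))
      (-((0 * (1 + a + b) - N * b * 1) / (1 + a + b) ^ 2)) a := hdiv.const_sub s2
  simp only [theta1, heq.deriv_eq, hg.deriv]
  ring

lemma t22 (a b : ℝ) (ha : 0 < a) (hb : 0 < b) :
    theta2 (theta2 (Lfun s1 s2 N)) (a, b)
      = -(b * (N * (1 + a + b) - N * b) / (1 + a + b) ^ 2) := by
  have hden : (0:ℝ) < 1 + a + b := by linarith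
  have heq : (fun u => theta2 (Lfun s1 s2 N) (a, u))
      =ᶠ[nhds b] fun u => s2 - N * u / (1 + a + u) := by
    filter_upwards [eventually_gt_nhds hb] with u hu
    exact theta2_L s1 s2 N a u ha hu
  have hnum : HasDerivAt (fun u : ℝ => N * u) N b := by
    simpa using (hasDerivAt_id b).const_mul N
  have hd : HasDerivAt (fun u : ℝ => 1 + a + u) 1 b := by
    simpa using (hasDerivAt_id b).const_add (1 + a)
  have hdiv : HasDerivAt (fun u : ℝ => N * u / (1 + a + u))
      ((N * (1 + a + b) - N * b * 1) / (1 + a + b) ^ 2) b :=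
    hnum.div hd hden.ne'
  have hg : HasDerivAt (fun u : ℝ => s2 - N * u / (1 + a + u))
      (-((N * (1 + a + b) - N * b * 1) / (1 + a + b) ^ 2)) b := hdiv.const_sub s2
  show b * deriv (fun u => theta2 (Lfun s1 s2 N) (a, u)) b = _
  rw [heq.deriv_eq, hg.deriv]
  ring

end Stmt15Aux

/-- At the critical point `x̂ = (s₁/s₀, s₂/s₀)` of
`L = s₁ log x₁ + s₂ log x₂ - N log(1+x₁+x₂)`, the toric Hessian determinant equals
`s₀s₁s₂/(s₀+s₁+s₂) ≠ 0`, and its reciprocal is `1/(s₀s₁) + 1/(s₀s₂) + 1/(s₁s₂)`. -/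
theorem stmt15 (s0 s1 s2 : ℝ) (h0 : 0 < s0) (h1 : 0 < s1) (h2 : 0 < s2)
    (N : ℝ) (hN : N = s0 + s1 + s2)
    (L : ℝ × ℝ → ℝ)
    (hL : L = fun x => s1 * Real.log x.1 + s2 * Real.log x.2 -
      N * Real.log (1 + x.1 + x.2))
    (xhat : ℝ × ℝ) (hxhat : xhat = (s1 / s0, s2 / s0))
    (detH : ℝ)
    (hdetH : detH = theta1 (theta1 L) xhat * theta2 (theta2 L) xhat -
      theta1 (theta2 L) xhat * theta2 (theta1 L) xhat) :
    detH = s0 * s1 * s2 / (s0 + s1 + s2) ∧ detH ≠ 0 ∧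
      detH⁻¹ = 1 / (s0 * s1) + 1 / (s0 * s2) + 1 / (s1 * s2) := by

  have hL' : L = Stmt15Aux.Lfun s1 s2 N := hL
  subst hL' hxhat hN
  have ha : 0 < s1 / s0 := div_pos h1 h0
  have hb : 0 < s2 / s0 := div_pos h2 h0
  rw [Stmt15Aux.t11 _ _ ha hb, Stmt15Aux.t22 _ _ ha hb,
    Stmt15Aux.t12 _ _ ha hb, Stmt15Aux.t21 _ _ ha hb] at hdetH
  have hc : (0:ℝ) < 1 + s1 / s0 + s2 / s0 := by positivity
  have hNpos : (0:ℝ) < s0 + s1 + s2 := by linarith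
  have hmain : detH = s0 * s1 * s2 / (s0 + s1 + s2) := by
    rw [hdetH]
    field_simp
    ring
  refine ⟨hmain, ?_, ?_⟩
  · rw [hmain]
    positivity
  · rw [hmain]
    rw [inv_div]
    field_simp
    ring


end
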